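/- The map (π,τ) ↦ ch(π,τ) is a bijection from S_{d+1} × S_d to the set of maximal chains of the ordered set partition poset O_{d+1}. In particular, the number of maximal chains of O_{d+1} is (d+1)!·d!. -/

import Mathlib

/-- `IsTotalPreorder X r` means that the binary relation `r` on `X` is total and a preorder.
(Removed from Mathlib; restored here with its old definition.) -/
class IsTotalPreorder (α : Sort*) (r : α → α → Prop) : Prop extends IsTrans α r, Std.Total r

/-- Ordered set partitions of `[n]`, encoded as total preorders on `Fin n`. -/
def OSP (n : ℕ) : Type := {r : Fin n → Fin n → Prop // IsTotalPreorder (Fin n) r}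

/-- The refinement order on ordered set partitions. -/
instance OSP.instPartialOrder (n : ℕ) : PartialOrder (OSP n) where
  le T T' := ∀ a b, T.1 a b → T'.1 a b
  le_refl _ _ _ h := h
  le_trans _ _ _ h1 h2 a b hab := h2 a b (h1 a b hab)
  le_antisymm T U h1 h2 := Subtype.ext (by
    funext a b
    exact propext ⟨h1 a b, h2 a b⟩)

/-- The (0-based) block index in the rank-`r` element `T(π,τ;r)` of the chain `ch(π,τ)`:
the diagram places `π⁻¹(0),…,π⁻¹(d)` in order with the bar in position `j` labeled `τ(j)`,
and `T(π,τ;r)` is obtained by removing the bars with label `< r`. -/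
def blk (d : ℕ) (π : Equiv.Perm (Fin (d+1))) (τ : Equiv.Perm (Fin d)) (r : ℕ)
    (x : Fin (d+1)) : ℕ :=
  (Finset.univ.filter fun j : Fin d => (j : ℕ) < (π x : ℕ) ∧ r ≤ (τ j : ℕ)).card

/-- The rank-`r` element `T(π,τ;r)` of the maximal chain `ch(π,τ)` in `O_{d+1}`. -/
def chElem (d : ℕ) (π : Equiv.Perm (Fin (d+1))) (τ : Equiv.Perm (Fin d)) (r : ℕ) :
    OSP (d+1) :=
  ⟨fun a b => blk d π τ r a ≤ blk d π τ r b,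
    { trans := fun _ _ _ => Nat.le_trans, total := fun _ _ => Nat.le_total _ _ }⟩

/-- The maximal chain `ch(π,τ) = {T(π,τ;r) : 0 ≤ r ≤ d}` in `O_{d+1}`. -/
def chSet (d : ℕ) (π : Equiv.Perm (Fin (d+1))) (τ : Equiv.Perm (Fin d)) :
    Set (OSP (d+1)) :=
  {T | ∃ r ≤ d, T = chElem d π τ r}

namespace OSPAux

open Finset

variable {n : ℕ}

theorem rel_refl (T : OSP n) (a : Fin n) : T.1 a a := (T.2.total a a).elim id id

theorem rel_trans (T : OSP n) {a b c : Fin n} (h1 : T.1 a b) (h2 : T.1 b c) : T.1 a c :=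
  T.2.trans a b c h1 h2

theorem rel_total (T : OSP n) (a b : Fin n) : T.1 a b ∨ T.1 b a := T.2.total a b

theorem osp_ext {T U : OSP n} (h : ∀ a b, T.1 a b ↔ U.1 a b) : T = U :=
  le_antisymm (fun a b => (h a b).1) (fun a b => (h a b).2)

def mkOSP (f : Fin n → ℕ) : OSP n :=
  ⟨fun a b => f a ≤ f b,
    { trans := fun _ _ _ => Nat.le_trans, total := fun _ _ => Nat.le_total _ _ }⟩

open Classical in
noncomputable def rk (T : OSP n) (a : Fin n) : ℕ :=
  (Finset.univ.filter fun b => T.1 b a ∧ ¬ T.1 a b).card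

theorem rk_mono (T : OSP n) {a b : Fin n} (h : T.1 a b) : rk T a ≤ rk T b := by
  classical
  apply Finset.card_le_card
  intro x hx
  simp only [rk, Finset.mem_filter, Finset.mem_univ, true_and] at hx ⊢
  exact ⟨rel_trans T hx.1 h, fun hbx => hx.2 (rel_trans T h hbx)⟩

theorem rk_strict (T : OSP n) {a b : Fin n} (h : ¬ T.1 a b) : rk T b < rk T a := by
  classical
  have hba : T.1 b a := (rel_total T a b).resolve_left h
  have hsub : (Finset.univ.filter fun x => T.1 x b ∧ ¬ T.1 b x) ⊆
      (Finset.univ.filter fun x => T.1 x a ∧ ¬ T.1 a x) := by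
    intro x hx
    simp only [Finset.mem_filter, Finset.mem_univ, true_and] at hx ⊢
    exact ⟨rel_trans T hx.1 hba, fun hax => h (rel_trans T hax hx.1)⟩
  exact Finset.card_lt_card ((Finset.ssubset_iff_of_subset hsub).2
    ⟨b, by simp [hba, h], by simp⟩)

theorem rel_iff_rk (T : OSP n) (a b : Fin n) : T.1 a b ↔ rk T a ≤ rk T b :=
  ⟨rk_mono T, fun h => by
    by_contra hn
    exact absurd h (not_le.2 (rk_strict T hn))⟩

theorem rk_lt (T : OSP n) (a : Fin n) : rk T a < n := by
  classical
  have hx : a ∉ (Finset.univ.filter fun b => T.1 b a ∧ ¬ T.1 a b) := by simp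
  have := Finset.card_lt_card ((Finset.ssubset_iff_of_subset (Finset.subset_univ _)).2
    ⟨a, Finset.mem_univ a, hx⟩)
  simpa [rk] using this

instance : Finite (OSP n) := by
  have hinj : Function.Injective (fun T : OSP n => (fun a => (⟨rk T a, rk_lt T a⟩ : Fin n))) := by
    intro T U h
    apply osp_ext
    intro a b
    have ha := congrFun h a
    have hb := congrFun h b
    simp only [Fin.mk.injEq] at ha hb
    rw [rel_iff_rk, rel_iff_rk, ha, hb]
  exact Finite.of_injective _ hinj

theorem exists_least {α : Type*} [PartialOrder α] (c : Set α) (hfin : c.Finite)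
    (hc : IsChain (· ≤ ·) c) (hne : c.Nonempty) : ∃ m ∈ c, ∀ T ∈ c, m ≤ T := by
  obtain ⟨m, hm, hmin⟩ := Set.Finite.exists_minimalFor id c hfin hne
  refine ⟨m, hm, fun T hT => ?_⟩
  rcases eq_or_ne m T with rfl | hne'
  · exact le_refl _
  · rcases hc hm hT hne' with h | h
    · exact h
    · exact hmin hT h

theorem exists_greatest {α : Type*} [PartialOrder α] (c : Set α) (hfin : c.Finite)
    (hc : IsChain (· ≤ ·) c) (hne : c.Nonempty) : ∃ m ∈ c, ∀ T ∈ c, T ≤ m := by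
  obtain ⟨m, hm, hmax⟩ := Set.Finite.exists_maximalFor id c hfin hne
  refine ⟨m, hm, fun T hT => ?_⟩
  rcases eq_or_ne m T with rfl | hne'
  · exact le_refl _
  · rcases hc hm hT hne' with h | h
    · exact hmax hT h
    · exact h

theorem strict_image_eq {α : Type*} [PartialOrder α] {d : ℕ} {e e' : ℕ → α}
    (he : ∀ r r', r < r' → r' ≤ d → e r < e r')
    (he' : ∀ r r', r < r' → r' ≤ d → e' r < e' r')
    (h : ∀ x, (∃ r ≤ d, x = e r) ↔ (∃ r ≤ d, x = e' r)) :
    ∀ r ≤ d, e r = e' r := by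
  intro r
  induction r using Nat.strong_induction_on with
  | _ r ih =>
    intro hrd
    have h1 : e' r ≤ e r := by
      obtain ⟨s, hs, hse⟩ := (h (e r)).1 ⟨r, hrd, rfl⟩
      rcases lt_trichotomy s r with hlt | rfl | hgt
      · exfalso
        have := ih s hlt (hlt.le.trans hrd)
        rw [← this] at hse
        exact absurd hse (ne_of_gt (he s r hlt hrd))
      · exact le_of_eq hse.symm
      · exact hse ▸ le_of_lt (he' r s hgt hs)
    have h2 : e r ≤ e' r := by
      obtain ⟨s, hs, hse⟩ := (h (e' r)).2 ⟨r, hrd, rfl⟩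
      rcases lt_trichotomy s r with hlt | rfl | hgt
      · exfalso
        have := ih s hlt (hlt.le.trans hrd)
        rw [this] at hse
        exact absurd hse (ne_of_gt (he' s r hlt hrd))
      · exact le_of_eq hse.symm
      · exact hse ▸ le_of_lt (he r s hgt hs)
    exact le_antisymm h2 h1

theorem perm_eq_of_le_iff {π π' : Equiv.Perm (Fin n)}
    (h : ∀ a b, ((π a : ℕ) ≤ (π b : ℕ) ↔ (π' a : ℕ) ≤ (π' b : ℕ))) : π = π' := by
  have hmono : Monotone (fun i => π (π'.symm i)) := by
    intro i i' hii
    have : (π' (π'.symm i) : ℕ) ≤ (π' (π'.symm i') : ℕ) := by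
      simp only [Equiv.apply_symm_apply]
      exact hii
    exact (h _ _).2 this
  have hsm : StrictMono (fun i => π (π'.symm i)) :=
    hmono.strictMono_of_injective (π.injective.comp π'.symm.injective)
  have hrange : Set.range (fun i => π (π'.symm i)) = Set.range (id : Fin n → Fin n) := by
    rw [Set.range_id]
    exact Set.range_eq_univ.2 (π.surjective.comp π'.symm.surjective)
  haveI : WellFoundedLT (Fin n) := inferInstance
  have hid : (fun i => π (π'.symm i)) = (id : Fin n → Fin n) :=
    (hsm.range_inj (strictMono_id (α := Fin n))).1 hrange
  ext a
  have := congrFun hid (π' a)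
  simp only [Equiv.symm_apply_apply, id_eq] at this
  exact congrArg Fin.val this

/-! ## Bar machinery -/

section Bars

variable {d : ℕ} (π : Equiv.Perm (Fin (d+1)))

def bf (B : Finset (Fin d)) (x : Fin (d+1)) : ℕ :=
  (B.filter fun j : Fin d => (j : ℕ) < (π x : ℕ)).card

def barOSP (B : Finset (Fin d)) : OSP (d+1) := mkOSP (bf π B)

open Classical in
noncomputable def Bset (T : OSP (d+1)) : Finset (Fin d) :=
  Finset.univ.filter fun j : Fin d => ¬ T.1 (π.symm j.succ) (π.symm j.castSucc)

theorem bf_split (B : Finset (Fin d)) {x y : Fin (d+1)} (hxy : (π x : ℕ) ≤ (π y : ℕ)) :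
    bf π B y = bf π B x + (B.filter fun j : Fin d => (π x : ℕ) ≤ (j : ℕ) ∧ (j : ℕ) < (π y : ℕ)).card := by
  classical
  rw [bf, bf, ← Finset.card_union_of_disjoint]
  · congr 1
    ext j
    simp only [Finset.mem_filter, Finset.mem_union]
    constructor
    · rintro ⟨hjB, hj⟩
      by_cases h : (j : ℕ) < (π x : ℕ)
      · exact Or.inl ⟨hjB, h⟩
      · exact Or.inr ⟨hjB, le_of_not_gt h, hj⟩
    · rintro (⟨hjB, hj⟩ | ⟨hjB, _, hj⟩)
      · exact ⟨hjB, lt_of_lt_of_le hj hxy⟩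
      · exact ⟨hjB, hj⟩
  · rw [Finset.disjoint_left]
    intro j hj hj'
    simp only [Finset.mem_filter] at hj hj'
    omega

theorem bar_rel_iff (B : Finset (Fin d)) (x y : Fin (d+1)) :
    (barOSP π B).1 x y ↔ ((π x : ℕ) ≤ (π y : ℕ) ∨
      (B.filter fun j : Fin d => (π y : ℕ) ≤ (j : ℕ) ∧ (j : ℕ) < (π x : ℕ)) = ∅) := by
  show bf π B x ≤ bf π B y ↔ _
  rcases le_or_gt (π x : ℕ) (π y : ℕ) with h | h
  · have := bf_split π B h
    constructor
    · intro _; exact Or.inl h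
    · intro _; omega
  · have hs := bf_split π B h.le
    constructor
    · intro hle
      right
      rw [← Finset.card_eq_zero]
      omega
    · rintro (h' | h')
      · omega
      · rw [h'] at hs
        simp at hs
        omega

theorem bar_mono {B B' : Finset (Fin d)} (h : B' ⊆ B) : barOSP π B ≤ barOSP π B' := by
  intro x y hxy
  rw [bar_rel_iff] at hxy ⊢
  rcases hxy with h' | h'
  · exact Or.inl h'
  · right
    rw [← Finset.subset_empty, ← h']
    exact Finset.monotone_filter_left _ h

theorem Bset_bar (B : Finset (Fin d)) : Bset π (barOSP π B) = B := by
  classical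
  ext j
  simp only [Bset, Finset.mem_filter, Finset.mem_univ, true_and]
  rw [bar_rel_iff]
  simp only [Equiv.apply_symm_apply, Fin.val_succ, Fin.coe_castSucc]
  constructor
  · intro h
    push_neg at h
    obtain ⟨h1, h2⟩ := h
    obtain ⟨j', hj'⟩ := h2
    rw [Finset.mem_filter] at hj'
    have : j' = j := Fin.ext (by omega)
    rw [← this]; exact hj'.1
  · intro hjB h
    rcases h with h | h
    · omega
    · rw [Finset.eq_empty_iff_forall_notMem] at h
      exact h j (Finset.mem_filter.2 ⟨hjB, le_refl _, by omega⟩)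

theorem bar_univ_rel (x y : Fin (d+1)) :
    (barOSP π Finset.univ).1 x y ↔ (π x : ℕ) ≤ (π y : ℕ) := by
  rw [bar_rel_iff]
  constructor
  · rintro (h | h)
    · exact h
    · by_contra hn
      push_neg at hn
      have hyd : (π y : ℕ) < d := by
        have := (π x).isLt; omega
      have : (⟨(π y : ℕ), hyd⟩ : Fin d) ∈
          (Finset.univ.filter fun j : Fin d => (π y : ℕ) ≤ (j : ℕ) ∧ (j : ℕ) < (π x : ℕ)) := by
        simp; omega
      rw [h] at this
      exact absurd this (Finset.notMem_empty _)
  · exact Or.inl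

theorem eq_bar_Bset {T : OSP (d+1)} (hT : barOSP π Finset.univ ≤ T) :
    T = barOSP π (Bset π T) := by
  classical
  apply osp_ext
  intro x y
  rw [bar_rel_iff]
  constructor
  · intro hxy
    rcases le_or_gt (π x : ℕ) (π y : ℕ) with h | h
    · exact Or.inl h
    · right
      rw [Finset.eq_empty_iff_forall_notMem]
      intro j hj
      rw [Finset.mem_filter] at hj
      obtain ⟨hjB, hjy, hjx⟩ := hj
      have h1 : T.1 (π.symm j.succ) x := by
        apply hT
        rw [bar_univ_rel]
        simp only [Equiv.apply_symm_apply, Fin.val_succ]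
        omega
      have h2 : T.1 y (π.symm j.castSucc) := by
        apply hT
        rw [bar_univ_rel]
        simp only [Equiv.apply_symm_apply, Fin.coe_castSucc]
        omega
      have hrel : T.1 (π.symm j.succ) (π.symm j.castSucc) :=
        rel_trans T (rel_trans T h1 hxy) h2
      simp only [Bset, Finset.mem_filter, Finset.mem_univ, true_and] at hjB
      exact hjB hrel
  · rintro (h | h)
    · apply hT
      rw [bar_univ_rel]
      exact h
    · rcases le_or_gt (π x : ℕ) (π y : ℕ) with h' | h'
      · apply hT; rw [bar_univ_rel]; exact h'
      · have key : ∀ k, (π y : ℕ) ≤ k → ∀ hk : k ≤ (π x : ℕ),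
            T.1 (π.symm ⟨k, by omega⟩) y := by
          intro k hk
          induction k, hk using Nat.le_induction with
          | base =>
            intro _
            have : (⟨((π y : ℕ)), by omega⟩ : Fin (d+1)) = π y := by
              apply Fin.ext; simp
            rw [this, Equiv.symm_apply_apply]
            exact rel_refl T y
          | succ k hk ihk =>
            intro hk1
            have hkd : k < d := by
              have := (π x).isLt; omega
            have hjmem : (⟨k, hkd⟩ : Fin d) ∉
                (Bset π T).filter fun j : Fin d => (π y : ℕ) ≤ (j : ℕ) ∧ (j : ℕ) < (π x : ℕ) := by
              rw [h]; exact Finset.notMem_empty _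
            rw [Finset.mem_filter] at hjmem
            push_neg at hjmem
            have hnotB : (⟨k, hkd⟩ : Fin d) ∉ Bset π T := by
              intro hmem
              have := hjmem hmem
              simp at this
              omega
            simp only [Bset, Finset.mem_filter, Finset.mem_univ, true_and, not_not] at hnotB
            have hsucc : ((⟨k, hkd⟩ : Fin d).succ : Fin (d+1)) = ⟨k+1, by omega⟩ := rfl
            have hcast : ((⟨k, hkd⟩ : Fin d).castSucc : Fin (d+1)) = ⟨k, by omega⟩ := rfl
            rw [hsucc, hcast] at hnotB
            exact rel_trans T hnotB (ihk (by omega))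
        have := key (π x : ℕ) (le_of_lt h') (le_refl _)
        have heq : (⟨((π x : ℕ)), by omega⟩ : Fin (d+1)) = π x := by
          apply Fin.ext; simp
        rw [heq, Equiv.symm_apply_apply] at this
        exact this

theorem le_iff_Bset {T U : OSP (d+1)} (hT : barOSP π Finset.univ ≤ T)
    (hU : barOSP π Finset.univ ≤ U) : T ≤ U ↔ Bset π U ⊆ Bset π T := by
  classical
  constructor
  · intro h j hj
    simp only [Bset, Finset.mem_filter, Finset.mem_univ, true_and] at hj ⊢
    exact fun hrel => hj (h _ _ hrel)
  · intro h
    calc T = barOSP π (Bset π T) := eq_bar_Bset π hT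
    _ ≤ barOSP π (Bset π U) := bar_mono π h
    _ = U := (eq_bar_Bset π hU).symm

theorem eq_of_Bset_eq {T U : OSP (d+1)} (hT : barOSP π Finset.univ ≤ T)
    (hU : barOSP π Finset.univ ≤ U) (h : Bset π T = Bset π U) : T = U := by
  rw [eq_bar_Bset π hT, eq_bar_Bset π hU, h]

theorem chain_ncard_le (c : Set (OSP (d+1))) (hc : IsChain (· ≤ ·) c)
    (hm : ∀ T ∈ c, barOSP π Finset.univ ≤ T) : c.ncard ≤ d + 1 := by
  classical
  have h := Set.ncard_le_ncard_of_injOn (s := c) (fun T => (Bset π T).card)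
    (t := ↑(Finset.range (d+1))) ?_ ?_ (Set.toFinite _)
  · rwa [Set.ncard_coe_finset, Finset.card_range] at h
  · intro T _
    simp only [Finset.coe_range, Set.mem_Iio]
    have : (Bset π T).card ≤ d := by
      have := Finset.card_le_univ (Bset π T)
      simpa using this
    omega
  · intro T hTc U hUc hcard
    rcases eq_or_ne T U with h | hne
    · exact h
    · exfalso
      rcases hc hTc hUc hne with hle | hle
      · have hsub : Bset π U ⊆ Bset π T := (le_iff_Bset π (hm T hTc) (hm U hUc)).1 hle
        have : Bset π U = Bset π T := Finset.eq_of_subset_of_card_le hsub (le_of_eq hcard)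
        exact hne (eq_of_Bset_eq π (hm T hTc) (hm U hUc) this.symm)
      · have hsub : Bset π T ⊆ Bset π U := (le_iff_Bset π (hm U hUc) (hm T hTc)).1 hle
        have : Bset π T = Bset π U := Finset.eq_of_subset_of_card_le hsub (le_of_eq hcard.symm)
        exact hne (eq_of_Bset_eq π (hm T hTc) (hm U hUc) this)

theorem bar_univ_minimal {T : OSP (d+1)} (h : T ≤ barOSP π Finset.univ) :
    T = barOSP π Finset.univ := by
  apply le_antisymm h
  intro a b hab
  rw [bar_univ_rel] at hab
  by_contra hn
  have hba : T.1 b a := (rel_total T a b).resolve_left hn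
  have : (π b : ℕ) ≤ (π a : ℕ) := (bar_univ_rel π b a).1 (h b a hba)
  have hab' : π a = π b := Fin.ext (by omega)
  have : a = b := π.injective hab'
  exact hn (this ▸ rel_refl T a)

end Bars

theorem card_filter_lt {d m : ℕ} (hm : m ≤ d) :
    (Finset.univ.filter fun j : Fin d => (j : ℕ) < m).card = m := by
  rw [← Finset.card_range m]
  apply Finset.card_bij (fun (j : Fin d) _ => (j : ℕ))
  · intro j hj
    simp only [Finset.mem_filter, Finset.mem_univ, true_and] at hj
    simpa using hj
  · intro j _ j' _ h
    exact Fin.ext h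
  · intro x hx
    simp only [Finset.mem_range] at hx
    exact ⟨⟨x, by omega⟩, by simpa using hx, rfl⟩

theorem card_filter_tau {d : ℕ} (τ : Equiv.Perm (Fin d)) {r : ℕ} (hr : r ≤ d) :
    (Finset.univ.filter fun j : Fin d => r ≤ (τ j : ℕ)).card = d - r := by
  classical
  have h1 : (Finset.univ.filter fun j : Fin d => ¬ r ≤ (τ j : ℕ)).card = r := by
    have hbij : (Finset.univ.filter fun j : Fin d => ¬ r ≤ (τ j : ℕ)).card
        = (Finset.univ.filter fun j : Fin d => (j : ℕ) < r).card := by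
      apply Finset.card_bij (fun (j : Fin d) _ => τ j)
      · intro j hj
        simp only [Finset.mem_filter, Finset.mem_univ, true_and, not_le] at hj ⊢
        exact hj
      · intro j _ j' _ h
        exact τ.injective h
      · intro v hv
        simp only [Finset.mem_filter, Finset.mem_univ, true_and, not_le] at hv
        exact ⟨τ.symm v, by simpa using hv, by simp⟩
    rw [hbij, card_filter_lt (d := d) hr]
  have h2 := Finset.card_filter_add_card_filter_not
    (s := (Finset.univ : Finset (Fin d))) (p := fun j : Fin d => r ≤ (τ j : ℕ))
  simp only [Finset.card_univ, Fintype.card_fin] at h2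
  omega

end OSPAux

open OSPAux Finset

theorem chElem_eq_bar (d : ℕ) (π : Equiv.Perm (Fin (d+1))) (τ : Equiv.Perm (Fin d)) (r : ℕ) :
    chElem d π τ r = barOSP π (Finset.univ.filter fun j : Fin d => r ≤ (τ j : ℕ)) := by
  have hblk : ∀ x, blk d π τ r x = bf π (Finset.univ.filter fun j : Fin d => r ≤ (τ j : ℕ)) x := by
    intro x
    rw [blk, bf, Finset.filter_filter]
    congr 1
    ext j
    simp only [Finset.mem_filter, Finset.mem_univ, true_and]
    tauto
  apply osp_ext
  intro a b
  show blk d π τ r a ≤ blk d π τ r b ↔ _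
  rw [hblk, hblk]
  rfl

theorem Bset_chElem (d : ℕ) (π : Equiv.Perm (Fin (d+1))) (τ : Equiv.Perm (Fin d)) (r : ℕ) :
    Bset π (chElem d π τ r) = Finset.univ.filter fun j : Fin d => r ≤ (τ j : ℕ) := by
  rw [chElem_eq_bar, Bset_bar]

theorem card_Bset_chElem (d : ℕ) (π : Equiv.Perm (Fin (d+1))) (τ : Equiv.Perm (Fin d))
    {r : ℕ} (hr : r ≤ d) : (Bset π (chElem d π τ r)).card = d - r := by
  rw [Bset_chElem]
  exact card_filter_tau τ hr

theorem chElem_le (d : ℕ) (π : Equiv.Perm (Fin (d+1))) (τ : Equiv.Perm (Fin d))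
    {r r' : ℕ} (h : r ≤ r') : chElem d π τ r ≤ chElem d π τ r' := by
  rw [chElem_eq_bar, chElem_eq_bar]
  apply bar_mono
  apply Finset.monotone_filter_right
  intro j hj
  omega

theorem chElem_zero_eq (d : ℕ) (π : Equiv.Perm (Fin (d+1))) (τ : Equiv.Perm (Fin d)) :
    chElem d π τ 0 = barOSP π Finset.univ := by
  rw [chElem_eq_bar]
  congr 1
  simp

theorem univ_le_chElem (d : ℕ) (π : Equiv.Perm (Fin (d+1))) (τ : Equiv.Perm (Fin d)) (r : ℕ) :
    barOSP π Finset.univ ≤ chElem d π τ r := by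
  rw [← chElem_zero_eq d π τ]
  exact chElem_le d π τ (Nat.zero_le r)

theorem chElem_strict (d : ℕ) (π : Equiv.Perm (Fin (d+1))) (τ : Equiv.Perm (Fin d))
    {r r' : ℕ} (h : r < r') (h' : r' ≤ d) : chElem d π τ r < chElem d π τ r' := by
  refine lt_of_le_of_ne (chElem_le d π τ h.le) ?_
  intro heq
  have := congrArg (fun T => (Bset π T).card) heq
  simp only [card_Bset_chElem d π τ (h.le.trans h'), card_Bset_chElem d π τ h'] at this
  omega

theorem ncard_chSet (d : ℕ) (π : Equiv.Perm (Fin (d+1))) (τ : Equiv.Perm (Fin d)) :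
    (chSet d π τ).ncard = d + 1 := by
  have himg : chSet d π τ = (fun r => chElem d π τ r) '' ↑(Finset.range (d+1)) := by
    ext T
    simp only [chSet, Set.mem_setOf_eq, Set.mem_image, Finset.coe_range, Set.mem_Iio]
    constructor
    · rintro ⟨r, hr, rfl⟩; exact ⟨r, by omega, rfl⟩
    · rintro ⟨r, hr, rfl⟩; exact ⟨r, by omega, rfl⟩
  rw [himg, Set.ncard_image_of_injOn, Set.ncard_coe_finset, Finset.card_range]
  intro r hr r' hr' heq
  simp only [Finset.coe_range, Set.mem_Iio] at hr hr'
  by_contra hne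
  rcases Nat.lt_or_ge r r' with h | h
  · exact absurd heq (ne_of_lt (chElem_strict d π τ h (by omega)))
  · have : r' < r := by omega
    exact absurd heq.symm (ne_of_lt (chElem_strict d π τ this (by omega)))

theorem chSet_isMaxChain (d : ℕ) (π : Equiv.Perm (Fin (d+1))) (τ : Equiv.Perm (Fin d)) :
    IsMaxChain (· ≤ ·) (chSet d π τ) := by
  constructor
  · rintro T ⟨r, hr, rfl⟩ U ⟨r', hr', rfl⟩ _
    rcases le_total r r' with h | h
    · exact Or.inl (chElem_le d π τ h)
    · exact Or.inr (chElem_le d π τ h)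
  · intro t ht hsub
    have hne : t.Nonempty := ⟨chElem d π τ 0, hsub ⟨0, Nat.zero_le d, rfl⟩⟩
    obtain ⟨m, hmt, hmle⟩ := exists_least t (Set.toFinite t) ht hne
    have hm0 : m = barOSP π Finset.univ := by
      have h1 : m ≤ chElem d π τ 0 := hmle _ (hsub ⟨0, Nat.zero_le d, rfl⟩)
      rw [chElem_zero_eq] at h1
      exact bar_univ_minimal π h1
    have hlb : ∀ T ∈ t, barOSP π Finset.univ ≤ T := fun T hT => hm0 ▸ hmle T hT
    have hbound := chain_ncard_le π t ht hlb
    apply Set.eq_of_subset_of_ncard_le hsub _ (Set.toFinite t)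
    rw [ncard_chSet]
    exact hbound

theorem chSet_injective (d : ℕ) :
    Function.Injective
      (fun p : Equiv.Perm (Fin (d+1)) × Equiv.Perm (Fin d) => chSet d p.1 p.2) := by
  rintro ⟨π, τ⟩ ⟨π', τ'⟩ h
  simp only at h
  have hpt : ∀ r ≤ d, chElem d π τ r = chElem d π' τ' r := by
    apply strict_image_eq (fun r r' hrr' hr' => chElem_strict d π τ hrr' hr')
      (fun r r' hrr' hr' => chElem_strict d π' τ' hrr' hr')
    intro T
    constructor
    · intro hT
      have : T ∈ chSet d π τ := hT
      rw [h] at this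
      exact this
    · intro hT
      have : T ∈ chSet d π' τ' := hT
      rw [← h] at this
      exact this
  have h0 := hpt 0 (Nat.zero_le d)
  rw [chElem_zero_eq, chElem_zero_eq] at h0
  have hππ' : π = π' := by
    apply perm_eq_of_le_iff
    intro a b
    rw [← bar_univ_rel π a b, ← bar_univ_rel π' a b, h0]
  subst hππ'
  have hττ' : τ = τ' := by
    have hfil : ∀ r ≤ d, (Finset.univ.filter fun j : Fin d => r ≤ (τ j : ℕ)) =
        (Finset.univ.filter fun j : Fin d => r ≤ (τ' j : ℕ)) := by
      intro r hr
      rw [← Bset_chElem d π τ r, ← Bset_chElem d π τ' r, hpt r hr]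
    apply Equiv.ext
    intro j
    have key : ∀ r ≤ d, (r ≤ (τ j : ℕ) ↔ r ≤ (τ' j : ℕ)) := by
      intro r hr
      have := hfil r hr
      constructor
      · intro hle
        have : j ∈ Finset.univ.filter fun j : Fin d => r ≤ (τ' j : ℕ) := by
          rw [← hfil r hr]; simp [hle]
        simpa using this
      · intro hle
        have : j ∈ Finset.univ.filter fun j : Fin d => r ≤ (τ j : ℕ) := by
          rw [hfil r hr]; simp [hle]
        simpa using this
    apply Fin.ext
    have h1 : (τ j : ℕ) ≤ (τ' j : ℕ) :=
      (key (τ j : ℕ) (le_of_lt (τ j).isLt)).1 (le_refl _)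
    have h2 : (τ' j : ℕ) ≤ (τ j : ℕ) :=
      (key (τ' j : ℕ) (le_of_lt (τ' j).isLt)).2 (le_refl _)
    omega
  rw [hττ']

theorem maxChain_surjective (d : ℕ) (c : Set (OSP (d+1))) (hc : IsMaxChain (· ≤ ·) c) :
    ∃ p : Equiv.Perm (Fin (d+1)) × Equiv.Perm (Fin d), c = chSet d p.1 p.2 := by
  classical
  obtain ⟨hchain, hmax⟩ := hc
  -- the top element belongs to c
  set Top : OSP (d+1) := mkOSP (fun _ => 0) with hTopdef
  have hTople : ∀ T : OSP (d+1), T ≤ Top := fun T a b _ => le_refl 0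
  have hTopc : Top ∈ c := by
    have h1 : IsChain (· ≤ ·) (insert Top c) :=
      hchain.insert (fun T hT _ => Or.inr (hTople T))
    have := hmax h1 (Set.subset_insert _ _)
    rw [this]
    exact Set.mem_insert _ _
  -- least element m of c
  obtain ⟨m, hmc, hmle⟩ := exists_least c (Set.toFinite c) hchain ⟨Top, hTopc⟩
  -- m is antisymmetric
  have hanti : ∀ a b, m.1 a b → m.1 b a → a = b := by
    by_contra hcon
    push_neg at hcon
    obtain ⟨a, b, hab, hba, hne⟩ := hcon
    set T : OSP (d+1) := mkOSP (fun x => 2 * rk m x + if x = b then 1 else 0) with hTdef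
    have hTm : T ≤ m := by
      intro x y hxy
      rw [rel_iff_rk]
      have hxy' : 2 * rk m x + (if x = b then 1 else 0) ≤
          2 * rk m y + (if y = b then 1 else 0) := hxy
      split_ifs at hxy' <;> omega
    have hrkab : rk m a = rk m b :=
      le_antisymm ((rel_iff_rk m a b).1 hab) ((rel_iff_rk m b a).1 hba)
    have hTne : T ≠ m := by
      intro heq
      have h1 : T.1 b a := by rw [heq]; exact hba
      have h1' : 2 * rk m b + (if b = b then 1 else 0) ≤
          2 * rk m a + (if a = b then 1 else 0) := h1
      rw [if_pos rfl, if_neg hne] at h1'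
      omega
    have hchain' : IsChain (· ≤ ·) (insert T c) :=
      hchain.insert (fun U hU _ => Or.inl (hTm.trans (hmle U hU)))
    have hTc : T ∈ c := by
      have := hmax hchain' (Set.subset_insert _ _)
      rw [this]
      exact Set.mem_insert _ _
    exact hTne (le_antisymm hTm (hmle T hTc))
  -- the permutation π
  have hrklt : ∀ x, rk m x < d + 1 := fun x => rk_lt m x
  set π0 : Fin (d+1) → Fin (d+1) := fun x => ⟨rk m x, hrklt x⟩ with hπ0def
  have hπ0inj : Function.Injective π0 := by
    intro x y h
    simp only [hπ0def, Fin.mk.injEq] at h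
    exact hanti x y ((rel_iff_rk m x y).2 h.le) ((rel_iff_rk m y x).2 h.ge)
  set π : Equiv.Perm (Fin (d+1)) :=
    Equiv.ofBijective π0 (Finite.injective_iff_bijective.1 hπ0inj) with hπdef
  have hπval : ∀ x, (π x : ℕ) = rk m x := fun x => rfl
  have hm_eq : m = barOSP π Finset.univ := by
    apply osp_ext
    intro x y
    rw [bar_univ_rel, hπval, hπval]
    exact rel_iff_rk m x y
  have hlb : ∀ T ∈ c, barOSP π Finset.univ ≤ T := fun T hT => hm_eq ▸ hmle T hT
  have hBm : (Bset π m).card = d := by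
    rw [hm_eq, Bset_bar]
    simp
  have hBtop : (Bset π Top).card = 0 := by
    rw [Finset.card_eq_zero, Finset.eq_empty_iff_forall_notMem]
    intro j hj
    simp only [Bset, Finset.mem_filter, Finset.mem_univ, true_and] at hj
    exact hj (le_refl 0)
  -- every size 0..d is attained
  have hcardall : ∀ s ≤ d, ∃ T ∈ c, (Bset π T).card = s := by
    intro s hs
    by_contra hno
    push_neg at hno
    have hsd : s < d := by
      rcases Nat.lt_or_ge s d with h | h
      · exact h
      · exact absurd (show (Bset π m).card = s by omega) (hno m hmc)
    have hs0 : 0 < s := by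
      rcases Nat.eq_zero_or_pos s with h | h
      · exact absurd (show (Bset π Top).card = s by omega) (hno Top hTopc)
      · exact h
    set A : Set (OSP (d+1)) := {T ∈ c | s < (Bset π T).card} with hAdef
    set B : Set (OSP (d+1)) := {T ∈ c | (Bset π T).card < s} with hBdef
    have hAsub : A ⊆ c := Set.sep_subset _ _
    have hBsub : B ⊆ c := Set.sep_subset _ _
    obtain ⟨U, hUA, hUmax⟩ := exists_greatest A (Set.toFinite A)
      (hchain.mono hAsub) ⟨m, hmc, by omega⟩
    obtain ⟨V, hVB, hVmin⟩ := exists_least B (Set.toFinite B)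
      (hchain.mono hBsub) ⟨Top, hTopc, by omega⟩
    have hUc : U ∈ c := hAsub hUA
    have hVc : V ∈ c := hBsub hVB
    have hUcard : s < (Bset π U).card := hUA.2
    have hVcard : (Bset π V).card < s := hVB.2
    have hUV : U ≤ V := by
      rcases eq_or_ne U V with h | h
      · exact absurd (h ▸ hUcard) (by omega)
      · rcases hchain hUc hVc h with h' | h'
        · exact h'
        · exfalso
          have := (le_iff_Bset π (hlb V hVc) (hlb U hUc)).1 h'
          have := Finset.card_le_card this
          omega
    have hBsubset : Bset π V ⊆ Bset π U := (le_iff_Bset π (hlb U hUc) (hlb V hVc)).1 hUV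
    obtain ⟨Bmid, hVBmid, hBmidU, hBmidcard⟩ :=
      Finset.exists_subsuperset_card_eq (n := s) hBsubset
        (by omega) (by omega)
    have hBmidc : Bmid.card = s := by omega
    set W : OSP (d+1) := barOSP π Bmid with hWdef
    have hUW : U ≤ W := by
      calc U = barOSP π (Bset π U) := eq_bar_Bset π (hlb U hUc)
      _ ≤ W := bar_mono π hBmidU
    have hWV : W ≤ V := by
      calc W ≤ barOSP π (Bset π V) := bar_mono π hVBmid
      _ = V := (eq_bar_Bset π (hlb V hVc)).symm
    have hcomp : ∀ T ∈ c, T ≤ W ∨ W ≤ T := by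
      intro T hT
      have hTU : T ≤ U ∨ U ≤ T := by
        rcases eq_or_ne T U with rfl | h
        · exact Or.inl (le_refl T)
        · exact hchain hT hUc h
      rcases hTU with h | h
      · exact Or.inl (h.trans hUW)
      · have hTV : T ≤ V ∨ V ≤ T := by
          rcases eq_or_ne T V with rfl | h'
          · exact Or.inl (le_refl T)
          · exact hchain hT hVc h'
        rcases hTV with h' | h'
        · -- Bset V ⊆ Bset T ⊆ Bset U
          have hc1 : Bset π T ⊆ Bset π U := (le_iff_Bset π (hlb U hUc) (hlb T hT)).1 h
          have hc2 : Bset π V ⊆ Bset π T := (le_iff_Bset π (hlb T hT) (hlb V hVc)).1 h'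
          have hTcard : (Bset π T).card ≠ s := hno T hT
          rcases Nat.lt_or_ge (Bset π T).card s with hlt | hge
          · exact Or.inr (hWV.trans (hVmin T ⟨hT, hlt⟩))
          · have : s < (Bset π T).card := by omega
            exact Or.inl ((hUmax T ⟨hT, this⟩).trans hUW)
        · exact Or.inr (hWV.trans h')
    have hchain' : IsChain (· ≤ ·) (insert W c) :=
      hchain.insert (fun T hT _ => (hcomp T hT).symm)
    have hWc : W ∈ c := by
      have := hmax hchain' (Set.subset_insert _ _)
      rw [this]
      exact Set.mem_insert _ _
    have : (Bset π W).card = s := by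
      rw [hWdef, Bset_bar]
      exact hBmidc
    exact hno W hWc this
  -- choose elements of each corank
  have hcard2 : ∀ r : ℕ, ∃ T, r ≤ d → (T ∈ c ∧ (Bset π T).card = d - r) := by
    intro r
    rcases le_or_gt r d with h | h
    · obtain ⟨T, hT, hTcard⟩ := hcardall (d - r) (Nat.sub_le d r)
      exact ⟨T, fun _ => ⟨hT, hTcard⟩⟩
    · exact ⟨Top, fun h' => absurd h' (by omega)⟩
  choose E hE using hcard2
  have hEc : ∀ r ≤ d, E r ∈ c := fun r hr => (hE r hr).1
  have hEcard : ∀ r ≤ d, (Bset π (E r)).card = d - r := fun r hr => (hE r hr).2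
  have hEmono : ∀ r r', r ≤ r' → r' ≤ d → E r ≤ E r' := by
    intro r r' hrr' hr'
    have hrd : r ≤ d := hrr'.trans hr'
    rcases eq_or_ne (E r) (E r') with h | h
    · exact le_of_eq h
    · rcases hchain (hEc r hrd) (hEc r' hr') h with h' | h'
      · exact h'
      · exfalso
        have hsub := (le_iff_Bset π (hlb _ (hEc r' hr')) (hlb _ (hEc r hrd))).1 h'
        have hcardle := Finset.card_le_card hsub
        rw [hEcard r hrd, hEcard r' hr'] at hcardle
        have : r = r' := by omega
        exact h (this ▸ rfl)
  have hBnest : ∀ r r', r ≤ r' → r' ≤ d → Bset π (E r') ⊆ Bset π (E r) := by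
    intro r r' hrr' hr'
    exact (le_iff_Bset π (hlb _ (hEc r (hrr'.trans hr'))) (hlb _ (hEc r' hr'))).1
      (hEmono r r' hrr' hr')
  -- define τ
  set τ0 : Fin d → ℕ := fun j =>
    (Finset.univ.filter fun r : Fin d => j ∈ Bset π (E ((r : ℕ)+1))).card with hτ0def
  have hkey : ∀ (j : Fin d) (s : ℕ), s ≤ d → (j ∈ Bset π (E s) ↔ s ≤ τ0 j) := by
    intro j s hs
    rcases s with _ | s
    · constructor
      · intro _; exact Nat.zero_le _
      · intro _
        have h0 : Bset π (E 0) = Finset.univ := by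
          apply Finset.eq_univ_of_card
          rw [hEcard 0 (Nat.zero_le d)]
          simp
        rw [h0]
        exact Finset.mem_univ j
    · constructor
      · intro hmem
        have hsub : (Finset.univ.filter fun r : Fin d => (r : ℕ) < s + 1) ⊆
            (Finset.univ.filter fun r : Fin d => j ∈ Bset π (E ((r : ℕ)+1))) := by
          intro r hr
          simp only [Finset.mem_filter, Finset.mem_univ, true_and] at hr ⊢
          exact hBnest ((r : ℕ)+1) (s+1) (by omega) hs hmem
        have := Finset.card_le_card hsub
        rwa [card_filter_lt (by omega : s + 1 ≤ d)] at this
      · intro hle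
        by_contra hmem
        have hsub : (Finset.univ.filter fun r : Fin d => j ∈ Bset π (E ((r : ℕ)+1))) ⊆
            (Finset.univ.filter fun r : Fin d => (r : ℕ) < s) := by
          intro r hr
          simp only [Finset.mem_filter, Finset.mem_univ, true_and] at hr ⊢
          by_contra hge
          push_neg at hge
          exact hmem (hBnest (s+1) ((r : ℕ)+1) (by omega) (by omega) hr)
        have := Finset.card_le_card hsub
        rw [card_filter_lt (by omega : s ≤ d)] at this
        have h2 : τ0 j ≤ s := this
        omega
  have hτ0lt : ∀ j, τ0 j < d := by
    intro j
    by_contra hge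
    push_neg at hge
    have : j ∈ Bset π (E d) := (hkey j d (le_refl d)).2 hge
    have hcard0 : (Bset π (E d)).card = 0 := by rw [hEcard d (le_refl d)]; omega
    rw [Finset.card_eq_zero] at hcard0
    rw [hcard0] at this
    exact Finset.notMem_empty j this
  set τf : Fin d → Fin d := fun j => ⟨τ0 j, hτ0lt j⟩ with hτfdef
  have hτfinj : Function.Injective τf := by
    intro j j' h
    simp only [hτfdef, Fin.mk.injEq] at h
    set t : ℕ := τ0 j with htdef
    have htd : t < d := hτ0lt j
    have hj1 : j ∈ Bset π (E t) := (hkey j t (by omega)).2 (le_refl t)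
    have hj2 : j' ∈ Bset π (E t) := (hkey j' t (by omega)).2 h.le
    have hj1' : j ∉ Bset π (E (t+1)) := fun hmem =>
      absurd ((hkey j (t+1) (by omega)).1 hmem) (by omega)
    have hj2' : j' ∉ Bset π (E (t+1)) := fun hmem =>
      absurd ((hkey j' (t+1) (by omega)).1 hmem) (by omega)
    have hsdiff : (Bset π (E t) \ Bset π (E (t+1))).card = 1 := by
      rw [Finset.card_sdiff_of_subset (hBnest t (t+1) (by omega) (by omega))]
      rw [hEcard t (by omega), hEcard (t+1) (by omega)]
      omega
    obtain ⟨x, hx⟩ := Finset.card_eq_one.1 hsdiff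
    have hjx : j ∈ ({x} : Finset (Fin d)) := hx ▸ Finset.mem_sdiff.2 ⟨hj1, hj1'⟩
    have hj'x : j' ∈ ({x} : Finset (Fin d)) := hx ▸ Finset.mem_sdiff.2 ⟨hj2, hj2'⟩
    rw [Finset.mem_singleton] at hjx hj'x
    rw [hjx, hj'x]
  set τ : Equiv.Perm (Fin d) :=
    Equiv.ofBijective τf (Finite.injective_iff_bijective.1 hτfinj) with hτdef
  have hτval : ∀ j, (τ j : ℕ) = τ0 j := fun j => rfl
  -- E r = chElem r
  have hEch : ∀ r ≤ d, E r = chElem d π τ r := by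
    intro r hr
    rw [chElem_eq_bar]
    have hfil : (Finset.univ.filter fun j : Fin d => r ≤ (τ j : ℕ)) = Bset π (E r) := by
      ext j
      simp only [Finset.mem_filter, Finset.mem_univ, true_and, hτval]
      exact (hkey j r hr).symm
    rw [hfil]
    exact eq_bar_Bset π (hlb _ (hEc r hr))
  refine ⟨⟨π, τ⟩, ?_⟩
  ext T
  simp only [chSet, Set.mem_setOf_eq]
  constructor
  · intro hT
    have hcardle : (Bset π T).card ≤ d := by
      have := Finset.card_le_univ (Bset π T)
      simpa using this
    set r : ℕ := d - (Bset π T).card with hrdef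
    have hrd : r ≤ d := Nat.sub_le d _
    have hcardeq : (Bset π T).card = d - r := by omega
    have hTE : T = E r := by
      rcases eq_or_ne T (E r) with h | h
      · exact h
      · exfalso
        rcases hchain hT (hEc r hrd) h with h' | h'
        · have hsub := (le_iff_Bset π (hlb T hT) (hlb _ (hEc r hrd))).1 h'
          have heq2 : Bset π (E r) = Bset π T := Finset.eq_of_subset_of_card_le hsub
            (by rw [hEcard r hrd, hcardeq])
          exact h (eq_of_Bset_eq π (hlb T hT) (hlb _ (hEc r hrd)) heq2.symm)
        · have hsub := (le_iff_Bset π (hlb _ (hEc r hrd)) (hlb T hT)).1 h'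
          have heq2 : Bset π T = Bset π (E r) := Finset.eq_of_subset_of_card_le hsub
            (by rw [hEcard r hrd, hcardeq])
          exact h (eq_of_Bset_eq π (hlb T hT) (hlb _ (hEc r hrd)) heq2)
    exact ⟨r, hrd, hTE.trans (hEch r hrd)⟩
  · rintro ⟨r, hr, rfl⟩
    rw [← hEch r hr]
    exact hEc r hr

theorem chain_bijection (d : ℕ) :
    (∀ (π : Equiv.Perm (Fin (d+1))) (τ : Equiv.Perm (Fin d)),
      IsMaxChain (· ≤ ·) (chSet d π τ)) ∧
    Function.Injective
      (fun p : Equiv.Perm (Fin (d+1)) × Equiv.Perm (Fin d) => chSet d p.1 p.2) ∧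
    (∀ c : Set (OSP (d+1)), IsMaxChain (· ≤ ·) c →
      ∃ p : Equiv.Perm (Fin (d+1)) × Equiv.Perm (Fin d), c = chSet d p.1 p.2) ∧
    Nat.card {c : Set (OSP (d+1)) // IsMaxChain (· ≤ ·) c}
      = (d+1).factorial * d.factorial := by
  refine ⟨chSet_isMaxChain d, chSet_injective d, maxChain_surjective d, ?_⟩
  have hbij : Function.Bijective
      (fun p : Equiv.Perm (Fin (d+1)) × Equiv.Perm (Fin d) =>
        (⟨chSet d p.1 p.2, chSet_isMaxChain d p.1 p.2⟩ :
          {c : Set (OSP (d+1)) // IsMaxChain (· ≤ ·) c})) := by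
    constructor
    · intro p p' h
      exact chSet_injective d (congrArg Subtype.val h)
    · rintro ⟨c, hc⟩
      obtain ⟨p, hp⟩ := maxChain_surjective d c hc
      exact ⟨p, Subtype.ext hp.symm⟩
  rw [← Nat.card_eq_of_bijective _ hbij, Nat.card_prod, Nat.card_eq_fintype_card,
    Nat.card_eq_fintype_card, Fintype.card_perm, Fintype.card_perm,
    Fintype.card_fin, Fintype.card_fin]
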